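/- Let λ, m, r, u, v, k be positive real numbers with kλr > muv, set V̄ = (kλr − muv)/(vru), A = m + u + v + V̄r, B = V̄ru + V̄rv + mu + mv + uv, C = muv + V̄ruv, D = uv, E = muv, and let τ ≥ 0. Then every complex root y of the equation y³ + Ay² + By + C = (Dy + E)e^{−τy} has strictly negative real part. -/

import Mathlib

open Complex

/-- For any delay `τ ≥ 0`, every complex root of
`y³ + Ay² + By + C = (Dy + E)e^{−τy}` has strictly negative real part. -/
theorem roots_neg_re_E1
    (lam m r u v k τ : ℝ)
    (hlam : 0 < lam) (hm : 0 < m) (hr : 0 < r) (hu : 0 < u)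
    (hv : 0 < v) (hk : 0 < k)
    (hR0 : k * lam * r > m * u * v) (hτ : 0 ≤ τ)
    (Vbar A B C D E : ℝ)
    (hV : Vbar = (k * lam * r - m * u * v) / (v * r * u))
    (hA : A = m + u + v + Vbar * r)
    (hB : B = Vbar * r * u + Vbar * r * v + m * u + m * v + u * v)
    (hC : C = m * u * v + Vbar * r * u * v)
    (hD : D = u * v)
    (hE : E = m * u * v) :
    ∀ y : ℂ,
      y ^ 3 + (A : ℂ) * y ^ 2 + (B : ℂ) * y + (C : ℂ)
        = ((D : ℂ) * y + (E : ℂ)) * Complex.exp (-(τ : ℂ) * y) →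
      y.re < 0 := by
  intro y hy
  by_contra hre
  push_neg at hre
  -- W = Vbar * r > 0
  have hVpos : 0 < Vbar := by
    rw [hV]
    apply div_pos (by linarith) (by positivity)
  set W : ℝ := Vbar * r with hWdef
  have hW : 0 < W := mul_pos hVpos hr
  -- factorized equation
  have heq : (y + (u : ℂ)) * (y + (v : ℂ)) * (y + (m : ℂ) + (W : ℂ))
      = ((u : ℂ) * v) * (y + (m : ℂ)) * Complex.exp (-(τ : ℂ) * y) := by
    subst hA hB hC hD hE
    push_cast at hy ⊢
    linear_combination hy
  -- take absolute values
  have habs := congrArg (fun z : ℂ => ‖z‖) heq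
  simp only [norm_mul] at habs
  rw [Complex.norm_of_nonneg hu.le, Complex.norm_of_nonneg hv.le] at habs
  have hexp : ‖Complex.exp (-(τ : ℂ) * y)‖ ≤ 1 := by
    rw [Complex.norm_exp]
    apply Real.exp_le_one_iff.mpr
    simp only [neg_mul, neg_re, Complex.mul_re, Complex.ofReal_re, Complex.ofReal_im]
    nlinarith [mul_nonneg hτ hre]
  -- lower bounds for moduli
  have hu' : (u : ℝ) ≤ ‖y + (u : ℂ)‖ := by
    calc (u : ℝ) ≤ (y + (u : ℂ)).re := by simp; linarith
    _ ≤ |(y + (u : ℂ)).re| := le_abs_self _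
    _ ≤ _ := Complex.abs_re_le_norm _
  have hv' : (v : ℝ) ≤ ‖y + (v : ℂ)‖ := by
    calc (v : ℝ) ≤ (y + (v : ℂ)).re := by simp; linarith
    _ ≤ |(y + (v : ℂ)).re| := le_abs_self _
    _ ≤ _ := Complex.abs_re_le_norm _
  have hmW : ‖y + (m : ℂ)‖ < ‖y + (m : ℂ) + (W : ℂ)‖ := by
    have h2 : (‖y + (m : ℂ)‖)^2 < (‖y + (m : ℂ) + (W : ℂ)‖)^2 := by
      rw [Complex.sq_norm, Complex.sq_norm, Complex.normSq_apply, Complex.normSq_apply]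
      simp only [Complex.add_re, Complex.add_im, Complex.ofReal_re, Complex.ofReal_im]
      nlinarith [mul_nonneg hre hW.le]
    exact lt_of_pow_lt_pow_left₀ 2 (norm_nonneg _) h2
  have hmpos : (0:ℝ) < ‖y + (m : ℂ)‖ := by
    calc (0:ℝ) < m := hm
    _ ≤ (y + (m : ℂ)).re := by simp; linarith
    _ ≤ |(y + (m : ℂ)).re| := le_abs_self _
    _ ≤ _ := Complex.abs_re_le_norm _
  -- contradiction
  have hR : u * v * ‖y + (m : ℂ)‖ *
      ‖Complex.exp (-(τ : ℂ) * y)‖ ≤ u * v * ‖y + (m : ℂ)‖ := by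
    calc u * v * ‖y + (m : ℂ)‖ * ‖Complex.exp (-(τ : ℂ) * y)‖
        ≤ u * v * ‖y + (m : ℂ)‖ * 1 := by
          apply mul_le_mul_of_nonneg_left hexp
          positivity
    _ = u * v * ‖y + (m : ℂ)‖ := by ring
  have hL : u * v * ‖y + (m : ℂ)‖ <
      ‖y + (u : ℂ)‖ * ‖y + (v : ℂ)‖ *
        ‖y + (m : ℂ) + (W : ℂ)‖ := by
    have h1 : u * v * ‖y + (m : ℂ)‖ < u * v * ‖y + (m : ℂ) + (W : ℂ)‖ := by
      apply mul_lt_mul_of_pos_left hmW (by positivity)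
    have h2 : u * v * ‖y + (m : ℂ) + (W : ℂ)‖ ≤
        ‖y + (u : ℂ)‖ * ‖y + (v : ℂ)‖ *
          ‖y + (m : ℂ) + (W : ℂ)‖ := by
      apply mul_le_mul_of_nonneg_right _ (norm_nonneg _)
      exact mul_le_mul hu' hv' (le_of_lt hv) (norm_nonneg _)
    linarith
  rw [habs] at hL
  linarith
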